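/- Let d ≥ 1 be an integer, ε > 0 and q ∈ [1,2], and define F : ℝ^d → ℝ by F(x) := (ε² + ‖x‖²)^{q/2}. Then F is twice continuously differentiable and for all x, y ∈ ℝ^d: (i) ‖∇F(x)‖ ≤ q·(ε² + ‖x‖²)^{(q−1)/2}; (ii) the Hessian quadratic form satisfies ⟨∇²F(x)·y, y⟩ ≤ q·(ε² + ‖x‖²)^{(q−2)/2}·‖y‖². -/

import Mathlib

open Real MeasureTheory

variable {d : ℕ}

local notation "E" => EuclideanSpace ℝ (Fin d)

noncomputable def Bmap : E →L[ℝ] E →L[ℝ] ℝ :=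
  LinearMap.mkContinuous₂ (innerₗ (EuclideanSpace ℝ (Fin d))) 1 (fun x y => by
    simpa using abs_real_inner_le_norm x y)

lemma Bmap_apply (x y : E) : Bmap x y = (inner ℝ x y : ℝ) := rfl

lemma norm_Bmap_le (x : E) : ‖Bmap x‖ ≤ ‖x‖ := by
  refine ContinuousLinearMap.opNorm_le_bound _ (norm_nonneg x) (fun y => ?_)
  simpa [Bmap_apply] using abs_real_inner_le_norm x y

section aux
variable (ε q : ℝ)

noncomputable def gfun (x : E) : ℝ := ε ^ 2 + ‖x‖ ^ 2

lemma gpos (hε : 0 < ε) (x : E) : 0 < gfun ε x :=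
  add_pos_of_pos_of_nonneg (pow_pos hε 2) (sq_nonneg _)

lemma hasFDerivAt_g (x : E) : HasFDerivAt (gfun ε (d := d)) (2 • Bmap x) x := by
  have h := (hasStrictFDerivAt_norm_sq x).hasFDerivAt.const_add (ε ^ 2)
  convert h using 1 <;> rfl

lemma hasFDerivAt_F (hε : 0 < ε) (x : E) :
    HasFDerivAt (fun x : E => (gfun ε x) ^ (q / 2))
      ((q * (gfun ε x) ^ (q / 2 - 1)) • Bmap x) x := by
  have h := (hasFDerivAt_g ε x).rpow_const (p := q / 2) (Or.inl (gpos ε hε x).ne')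
  refine h.congr_fderiv ?_
  ext y
  simp [smul_smul]
  ring

lemma fderiv_F_eq (hε : 0 < ε) :
    fderiv ℝ (fun x : E => (gfun ε x) ^ (q / 2)) =
      fun x : E => (q * (gfun ε x) ^ (q / 2 - 1)) • Bmap x :=
  funext fun x => (hasFDerivAt_F ε q hε x).fderiv

lemma hasFDerivAt_c (hε : 0 < ε) (x : E) :
    HasFDerivAt (fun x : E => q * (gfun ε x) ^ (q / 2 - 1))
      ((q * (q - 2) * (gfun ε x) ^ (q / 2 - 2)) • Bmap x) x := by
  have h := ((hasFDerivAt_g ε x).rpow_const (p := q / 2 - 1)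
    (Or.inl (gpos ε hε x).ne')).const_mul q
  refine h.congr_fderiv ?_
  ext y
  simp [smul_smul]
  rw [show q / 2 - 1 - 1 = q / 2 - 2 by ring]
  ring

lemma hasFDerivAt_F' (hε : 0 < ε) (x : E) :
    HasFDerivAt (fun x : E => (q * (gfun ε x) ^ (q / 2 - 1)) • Bmap x)
      ((q * (gfun ε x) ^ (q / 2 - 1)) • Bmap +
        ((q * (q - 2) * (gfun ε x) ^ (q / 2 - 2)) • Bmap x).smulRight (Bmap x)) x :=
  (hasFDerivAt_c ε q hε x).smul Bmap.hasFDerivAt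

lemma second_deriv (hε : 0 < ε) (x y : E) :
    iteratedFDeriv ℝ 2 (fun x : E => (gfun ε x) ^ (q / 2)) x ![y, y] =
      q * (gfun ε x) ^ (q / 2 - 1) * ‖y‖ ^ 2 +
        q * (q - 2) * (gfun ε x) ^ (q / 2 - 2) * (inner ℝ x y : ℝ) ^ 2 := by
  rw [iteratedFDeriv_two_apply, fderiv_F_eq ε q hε, (hasFDerivAt_F' ε q hε x).fderiv]
  simp only [ContinuousLinearMap.add_apply, ContinuousLinearMap.coe_smul', Pi.smul_apply,
    ContinuousLinearMap.smulRight_apply, Matrix.cons_val_zero, Matrix.cons_val_one,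
    Matrix.head_cons, Bmap_apply, smul_eq_mul, real_inner_self_eq_norm_sq]
  ring

end aux


theorem stmt12 (d : ℕ) (hd : 1 ≤ d) (ε : ℝ) (hε : 0 < ε) (q : ℝ) (hq : q ∈ Set.Icc (1 : ℝ) 2) :
    ContDiff ℝ 2 (fun x : EuclideanSpace ℝ (Fin d) => (ε ^ 2 + ‖x‖ ^ 2) ^ (q / 2)) ∧
    (∀ x : EuclideanSpace ℝ (Fin d),
      ‖fderiv ℝ (fun x : EuclideanSpace ℝ (Fin d) => (ε ^ 2 + ‖x‖ ^ 2) ^ (q / 2)) x‖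
        ≤ q * (ε ^ 2 + ‖x‖ ^ 2) ^ ((q - 1) / 2)) ∧
    (∀ x y : EuclideanSpace ℝ (Fin d),
      iteratedFDeriv ℝ 2 (fun x : EuclideanSpace ℝ (Fin d) => (ε ^ 2 + ‖x‖ ^ 2) ^ (q / 2)) x ![y, y]
        ≤ q * (ε ^ 2 + ‖x‖ ^ 2) ^ ((q - 2) / 2) * ‖y‖ ^ 2) := by
  obtain ⟨hq1, hq2⟩ := hq
  have hq0 : 0 ≤ q := by linarith
  have hgfun : (fun x : EuclideanSpace ℝ (Fin d) => (ε ^ 2 + ‖x‖ ^ 2) ^ (q / 2)) =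
      (fun x : EuclideanSpace ℝ (Fin d) => (gfun ε x) ^ (q / 2)) := rfl
  refine ⟨?_, ?_, ?_⟩
  · rw [hgfun]
    refine contDiff_iff_contDiffAt.2 fun x => ?_
    exact ((contDiff_const.add (contDiff_norm_sq ℝ)).contDiffAt).rpow_const_of_ne
      (gpos ε hε x).ne'
  · intro x
    rw [hgfun, fderiv_F_eq ε q hε]
    set t := gfun ε x with ht
    have htpos : 0 < t := gpos ε hε x
    have h1 : ‖(q * t ^ (q / 2 - 1)) • Bmap x‖ ≤ q * t ^ (q / 2 - 1) * ‖x‖ := by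
      refine (norm_smul_le (q * t ^ (q / 2 - 1)) (Bmap x)).trans ?_
      have hnn : 0 ≤ q * t ^ (q / 2 - 1) := mul_nonneg hq0 (rpow_nonneg htpos.le _)
      rw [Real.norm_eq_abs, abs_of_nonneg hnn]
      exact mul_le_mul_of_nonneg_left (norm_Bmap_le x) hnn
    refine h1.trans ?_
    have hx : ‖x‖ ≤ t ^ ((1 : ℝ) / 2) := by
      rw [← Real.sqrt_eq_rpow]
      rw [show ‖x‖ = Real.sqrt (‖x‖ ^ 2) by rw [Real.sqrt_sq (norm_nonneg x)]]
      exact Real.sqrt_le_sqrt (by simp [ht, gfun, sq_nonneg ε])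
    calc q * t ^ (q / 2 - 1) * ‖x‖ ≤ q * t ^ (q / 2 - 1) * t ^ ((1:ℝ)/2) :=
          mul_le_mul_of_nonneg_left hx (mul_nonneg hq0 (rpow_nonneg htpos.le _))
      _ = q * t ^ ((q - 1) / 2) := by
          rw [mul_assoc, ← Real.rpow_add htpos, show q / 2 - 1 + 1 / 2 = (q - 1) / 2 by ring]
  · intro x y
    rw [hgfun, second_deriv ε q hε x y]
    set t := gfun ε x with ht
    have htpos : 0 < t := gpos ε hε x
    have h2 : q * (q - 2) * t ^ (q / 2 - 2) * (inner ℝ x y : ℝ) ^ 2 ≤ 0 := by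
      apply mul_nonpos_of_nonpos_of_nonneg _ (sq_nonneg _)
      apply mul_nonpos_of_nonpos_of_nonneg _ (rpow_nonneg htpos.le _)
      exact mul_nonpos_of_nonneg_of_nonpos hq0 (by linarith)
    have h3 : q / 2 - 1 = (q - 2) / 2 := by ring
    rw [h3]
    have h4 : q * (ε ^ 2 + ‖x‖ ^ 2) ^ ((q - 2) / 2) * ‖y‖ ^ 2
        = q * t ^ ((q - 2) / 2) * ‖y‖ ^ 2 := rfl
    rw [h4]
    linarith
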